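/- Let i₁, i₂, i₃ be positive integers with i₃ > i₂ ≥ i₁ ≥ 1. Then the triple integral ∫₀¹ ∫₀¹ ∫₀¹ 1/(x₁^{i₁}·x₂^{i₂}·x₃^{i₃} + q) dx₃ dx₂ dx₁ satisfies ∫₀¹ ∫₀¹ ∫₀¹ 1/(x₁^{i₁}·x₂^{i₂}·x₃^{i₃} + q) dx₃ dx₂ dx₁ = Θ(q^(−1 + 1/i₃)) as q → 0⁺. -/

import Mathlib

open MeasureTheory Filter Topology

namespace ThetaScalingAux

open Set intervalIntegral Real

lemma contOn_aux (c q : ℝ) (hc : 0 ≤ c) (hq : 0 < q) (n : ℕ) :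
    ContinuousOn (fun x : ℝ => 1 / (c * x ^ n + q)) (Set.Icc 0 1) := by
  apply ContinuousOn.div continuousOn_const (by fun_prop)
  intro x hx
  have h0 : (0:ℝ) ≤ c * x ^ n := mul_nonneg hc (pow_nonneg hx.1 n)
  nlinarith

lemma int01 (c q : ℝ) (hc : 0 ≤ c) (hq : 0 < q) (n : ℕ) :
    IntervalIntegrable (fun x : ℝ => 1 / (c * x ^ n + q)) volume 0 1 := by
  apply ContinuousOn.intervalIntegrable
  rw [Set.uIcc_of_le zero_le_one]
  exact contOn_aux c q hc hq n

lemma low1d (n : ℕ) (hn : 1 ≤ n) (q : ℝ) (hq : 0 < q) (hq1 : q ≤ 1) :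
    (1/2) * q ^ (-1 + 1/(n:ℝ)) ≤ ∫ x in (0:ℝ)..1, 1 / (x ^ n + q) := by
  have hnR : (0:ℝ) < n := by exact_mod_cast hn
  set s : ℝ := q ^ (1/(n:ℝ)) with hs
  have hs0 : 0 < s := rpow_pos_of_pos hq _
  have hs1 : s ≤ 1 := Real.rpow_le_one hq.le hq1 (by positivity)
  have hsn : s ^ n = q := by
    rw [hs, ← Real.rpow_natCast (q ^ (1/(n:ℝ))) n, ← Real.rpow_mul hq.le]
    rw [one_div_mul_cancel (ne_of_gt hnR), Real.rpow_one]
  have hInt : IntervalIntegrable (fun x : ℝ => 1 / (x ^ n + q)) volume 0 1 := by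
    have := int01 1 q zero_le_one hq n
    simpa using this
  have hInt1 : IntervalIntegrable (fun x : ℝ => 1 / (x ^ n + q)) volume 0 s :=
    hInt.mono_set (by rw [Set.uIcc_of_le zero_le_one, Set.uIcc_of_le hs0.le]
                      exact Set.Icc_subset_Icc le_rfl hs1)
  have hInt2 : IntervalIntegrable (fun x : ℝ => 1 / (x ^ n + q)) volume s 1 :=
    hInt.mono_set (by rw [Set.uIcc_of_le zero_le_one, Set.uIcc_of_le hs1]
                      exact Set.Icc_subset_Icc hs0.le le_rfl)
  have hsplit : (∫ x in (0:ℝ)..s, 1 / (x ^ n + q)) + (∫ x in s..1, 1 / (x ^ n + q))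
      = ∫ x in (0:ℝ)..1, 1 / (x ^ n + q) :=
    intervalIntegral.integral_add_adjacent_intervals hInt1 hInt2
  have h2 : 0 ≤ ∫ x in s..1, 1 / (x ^ n + q) := by
    apply intervalIntegral.integral_nonneg hs1
    intro x hx
    have : 0 ≤ x ^ n := pow_nonneg (le_trans hs0.le hx.1) n
    positivity
  have h1 : s * (1/(2*q)) ≤ ∫ x in (0:ℝ)..s, 1 / (x ^ n + q) := by
    have hmono := intervalIntegral.integral_mono_on hs0.le
      (_root_.intervalIntegrable_const (c := 1/(2*q))) hInt1 ?_
    · have hc : (∫ _ in (0:ℝ)..s, (1/(2*q))) = s * (1/(2*q)) := by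
        rw [intervalIntegral.integral_const, smul_eq_mul]; ring
      linarith [hmono, hc.symm.le]
    · intro x hx
      have hxn : x ^ n ≤ q := by
        calc x ^ n ≤ s ^ n := pow_le_pow_left₀ hx.1 hx.2 n
          _ = q := hsn
      have hx0 : 0 ≤ x ^ n := pow_nonneg hx.1 n
      have hd : 0 < x ^ n + q := by linarith
      apply one_div_le_one_div_of_le hd
      linarith
  have hval : s * (1/(2*q)) = (1/2) * q ^ (-1 + 1/(n:ℝ)) := by
    rw [Real.rpow_add hq, Real.rpow_neg_one, hs]
    field_simp
  linarith [h1, h2, hsplit, hval.symm.le]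

lemma up1d (n : ℕ) (hn : 2 ≤ n) (b q : ℝ) (hb : 0 < b) (hq : 0 < q) :
    (∫ x in (0:ℝ)..1, 1 / (b * x ^ n + q)) ≤ 2 * q ^ (-1 + 1/(n:ℝ)) * b ^ (-(1/(n:ℝ))) := by
  have hnR : (2:ℝ) ≤ (n:ℝ) := by exact_mod_cast hn
  have hInt : IntervalIntegrable (fun x : ℝ => 1 / (b * x ^ n + q)) volume 0 1 :=
    int01 b q hb.le hq n
  have hq1n : (0:ℝ) < q ^ (1/(n:ℝ)) := rpow_pos_of_pos hq _
  have hb1n : (0:ℝ) < b ^ (1/(n:ℝ)) := rpow_pos_of_pos hb _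
  have hRHS : 2 * q ^ (-1 + 1/(n:ℝ)) * b ^ (-(1/(n:ℝ)))
      = 2 * (q ^ (1/(n:ℝ)) / (b ^ (1/(n:ℝ)) * q)) := by
    rw [Real.rpow_add hq, Real.rpow_neg_one, Real.rpow_neg hb.le]
    field_simp
  rcases le_or_gt q b with hqb | hqb
  · set s : ℝ := (q/b) ^ (1/(n:ℝ)) with hs
    have hqb0 : 0 < q / b := div_pos hq hb
    have hs0 : 0 < s := rpow_pos_of_pos hqb0 _
    have hs1 : s ≤ 1 := Real.rpow_le_one hqb0.le ((div_le_one hb).2 hqb) (by positivity)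
    have hsn : s ^ n = q / b := by
      rw [hs, ← Real.rpow_natCast ((q/b) ^ (1/(n:ℝ))) n, ← Real.rpow_mul hqb0.le]
      rw [one_div_mul_cancel (by positivity), Real.rpow_one]
    have hInt1 : IntervalIntegrable (fun x : ℝ => 1 / (b * x ^ n + q)) volume 0 s :=
      hInt.mono_set (by rw [Set.uIcc_of_le zero_le_one, Set.uIcc_of_le hs0.le]
                        exact Set.Icc_subset_Icc le_rfl hs1)
    have hInt2 : IntervalIntegrable (fun x : ℝ => 1 / (b * x ^ n + q)) volume s 1 :=
      hInt.mono_set (by rw [Set.uIcc_of_le zero_le_one, Set.uIcc_of_le hs1]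
                        exact Set.Icc_subset_Icc hs0.le le_rfl)
    have hsplit : (∫ x in (0:ℝ)..s, 1 / (b * x ^ n + q)) + (∫ x in s..1, 1 / (b * x ^ n + q))
        = ∫ x in (0:ℝ)..1, 1 / (b * x ^ n + q) :=
      intervalIntegral.integral_add_adjacent_intervals hInt1 hInt2
    have h1 : (∫ x in (0:ℝ)..s, 1 / (b * x ^ n + q)) ≤ s * (1/q) := by
      have hmono := intervalIntegral.integral_mono_on hs0.le hInt1
        (_root_.intervalIntegrable_const (c := 1/q)) ?_
      · have hc : (∫ _ in (0:ℝ)..s, (1/q)) = s * (1/q) := by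
          rw [intervalIntegral.integral_const, smul_eq_mul]; ring
        linarith [hmono, hc.le]
      · intro x hx
        have hx0 : 0 ≤ b * x ^ n := mul_nonneg hb.le (pow_nonneg hx.1 n)
        apply one_div_le_one_div_of_le hq
        linarith
    have hIntRpow : IntervalIntegrable (fun x : ℝ => x ^ (-(n:ℝ))) volume s 1 := by
      apply intervalIntegrable_rpow
      right
      rw [Set.uIcc_of_le hs1]
      intro h; exact absurd h.1 (not_le.2 hs0)
    have h2 : (∫ x in s..1, 1 / (b * x ^ n + q)) ≤ (1/b) * ∫ x in s..1, x ^ (-(n:ℝ)) := by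
      rw [← intervalIntegral.integral_const_mul]
      apply intervalIntegral.integral_mono_on hs1 hInt2 (hIntRpow.const_mul _)
      intro x hx
      have hx0 : 0 < x := lt_of_lt_of_le hs0 hx.1
      have hxn : 0 < x ^ n := pow_pos hx0 n
      have hbxn : 0 < b * x ^ n := by positivity
      rw [Real.rpow_neg hx0.le, Real.rpow_natCast]
      have hre : (1:ℝ)/b * (x^n)⁻¹ = 1/(b * x^n) := by field_simp
      rw [hre]
      exact one_div_le_one_div_of_le hbxn (by linarith)
    have hEval : (∫ x in s..1, x ^ (-(n:ℝ))) = (1 - s ^ (-(n:ℝ) + 1)) / (-(n:ℝ) + 1) := by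
      rw [integral_rpow]
      · rw [Real.one_rpow]
      · right
        constructor
        · intro h; have := neg_inj.mp h; linarith
        · rw [Set.uIcc_of_le hs1]; intro h; exact absurd h.1 (not_le.2 hs0)
    have hs1n : s ^ (-(n:ℝ) + 1) = s * (b/q) := by
      rw [Real.rpow_add hs0, Real.rpow_one, Real.rpow_neg hs0.le, Real.rpow_natCast, hsn]
      field_simp
    have hE : (∫ x in s..1, x ^ (-(n:ℝ))) ≤ s * (b/q) / ((n:ℝ) - 1) := by
      rw [hEval, hs1n]
      have heq : (1 - s*(b/q))/(-(n:ℝ)+1) = (s*(b/q) - 1)/((n:ℝ)-1) := by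
        rw [div_eq_div_iff (by linarith) (by linarith)]; ring
      rw [heq]
      gcongr
      · linarith
      · linarith
    have e1 : (1/b)*(s*(b/q)/((n:ℝ)-1)) = s/q * (((n:ℝ)-1))⁻¹ := by
      field_simp
    have e2 : (((n:ℝ)-1))⁻¹ ≤ 1 := by
      rw [inv_le_one_iff₀]; right; linarith
    have e3 : 0 ≤ s/q := by positivity
    have h2' : (∫ x in s..1, 1 / (b * x ^ n + q)) ≤ s/q * (((n:ℝ)-1))⁻¹ := by
      rw [← e1]
      refine h2.trans ?_
      apply mul_le_mul_of_nonneg_left hE (by positivity)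
    have e4 : 2*(s/q) = 2 * (q ^ (1/(n:ℝ)) / (b ^ (1/(n:ℝ)) * q)) := by
      rw [hs, Real.div_rpow hq.le hb.le]
      field_simp
    rw [hRHS, ← e4, ← hsplit]
    have : s/q * (((n:ℝ)-1))⁻¹ ≤ s/q := by nlinarith
    have hsq : s * (1/q) = s/q := by ring
    linarith
  · have h1 : (∫ x in (0:ℝ)..1, 1 / (b * x ^ n + q)) ≤ 1/q := by
      have hmono := intervalIntegral.integral_mono_on zero_le_one hInt
        (_root_.intervalIntegrable_const (c := 1/q)) ?_
      · have hc : (∫ _ in (0:ℝ)..1, (1/q)) = 1/q := by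
          rw [intervalIntegral.integral_const, smul_eq_mul]; ring
        linarith [hmono, hc.le]
      · intro x hx
        have hx0 : 0 ≤ b * x ^ n := mul_nonneg hb.le (pow_nonneg hx.1 n)
        apply one_div_le_one_div_of_le hq
        linarith
    have h2 : q ^ (-(1/(n:ℝ))) ≤ b ^ (-(1/(n:ℝ))) :=
      Real.rpow_le_rpow_of_nonpos hb hqb.le (neg_nonpos.2 (by positivity))
    have h3 : (1:ℝ)/q = q ^ (-1 + 1/(n:ℝ)) * q ^ (-(1/(n:ℝ))) := by
      have he : (-1 + 1/(n:ℝ)) + (-(1/(n:ℝ))) = -1 := by ring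
      rw [← Real.rpow_add hq, he, Real.rpow_neg_one, one_div]
    have hqr : 0 < q ^ (-1 + 1/(n:ℝ)) := rpow_pos_of_pos hq _
    calc (∫ x in (0:ℝ)..1, 1 / (b * x ^ n + q)) ≤ 1/q := h1
      _ = q ^ (-1 + 1/(n:ℝ)) * q ^ (-(1/(n:ℝ))) := h3
      _ ≤ q ^ (-1 + 1/(n:ℝ)) * b ^ (-(1/(n:ℝ))) := by
          apply mul_le_mul_of_nonneg_left h2 hqr.le
      _ ≤ 2 * q ^ (-1 + 1/(n:ℝ)) * b ^ (-(1/(n:ℝ))) := by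
          nlinarith [rpow_pos_of_pos hb (-(1/(n:ℝ)))]

lemma meas_uncurry (i₁ i₂ i₃ : ℕ) (q : ℝ) :
    Measurable (fun p : (ℝ × ℝ) × ℝ => 1 / (p.1.1 ^ i₁ * p.1.2 ^ i₂ * p.2 ^ i₃ + q)) := by
  have hden : Measurable (fun p : (ℝ × ℝ) × ℝ => p.1.1 ^ i₁ * p.1.2 ^ i₂ * p.2 ^ i₃ + q) := by
    fun_prop
  exact measurable_const.div hden

lemma meas_inner (i₁ i₂ i₃ : ℕ) (q : ℝ) :
    StronglyMeasurable (fun p : ℝ × ℝ =>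
      ∫ x₃ in (0:ℝ)..1, 1 / (p.1 ^ i₁ * p.2 ^ i₂ * x₃ ^ i₃ + q)) := by
  have he : (fun p : ℝ × ℝ => ∫ x₃ in (0:ℝ)..1, 1 / (p.1 ^ i₁ * p.2 ^ i₂ * x₃ ^ i₃ + q))
      = fun p : ℝ × ℝ => ∫ x₃, 1 / (p.1 ^ i₁ * p.2 ^ i₂ * x₃ ^ i₃ + q)
          ∂(volume.restrict (Set.Ioc (0:ℝ) 1)) := by
    funext p; exact intervalIntegral.integral_of_le zero_le_one
  rw [he]
  exact StronglyMeasurable.integral_prod_right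
    ((meas_uncurry i₁ i₂ i₃ q).stronglyMeasurable)

lemma meas_mid (i₁ i₂ i₃ : ℕ) (q : ℝ) :
    StronglyMeasurable (fun x₁ : ℝ =>
      ∫ x₂ in (0:ℝ)..1, ∫ x₃ in (0:ℝ)..1, 1 / (x₁ ^ i₁ * x₂ ^ i₂ * x₃ ^ i₃ + q)) := by
  have he : (fun x₁ : ℝ =>
      ∫ x₂ in (0:ℝ)..1, ∫ x₃ in (0:ℝ)..1, 1 / (x₁ ^ i₁ * x₂ ^ i₂ * x₃ ^ i₃ + q))
      = fun x₁ : ℝ => ∫ x₂, (fun p : ℝ × ℝ =>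
          ∫ x₃ in (0:ℝ)..1, 1 / (p.1 ^ i₁ * p.2 ^ i₂ * x₃ ^ i₃ + q)) (x₁, x₂)
          ∂(volume.restrict (Set.Ioc (0:ℝ) 1)) := by
    funext x₁; exact intervalIntegral.integral_of_le zero_le_one
  rw [he]
  exact StronglyMeasurable.integral_prod_right (meas_inner i₁ i₂ i₃ q)

end ThetaScalingAux

/-- `I = Θ(R)` as `q → 0⁺`: there exist constants `0 < c ≤ C` and `q₀ > 0` such that
`c·R q ≤ I q ≤ C·R q` for all `0 < q < q₀`. -/
def IsThetaAtZero (I R : ℝ → ℝ) : Prop :=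
  ∃ c C q₀ : ℝ, 0 < c ∧ c ≤ C ∧ 0 < q₀ ∧
    ∀ q : ℝ, 0 < q → q < q₀ → c * R q ≤ I q ∧ I q ≤ C * R q

open ThetaScalingAux Set intervalIntegral Real MeasureTheory

/-- Theorem 4.4, Cases 1, 2, 5, 6: for positive integers
`i₃ > i₂ ≥ i₁ ≥ 1`,
`∫₀¹ ∫₀¹ ∫₀¹ 1/(x₁^{i₁}·x₂^{i₂}·x₃^{i₃} + q) dx₃ dx₂ dx₁ = Θ(q^(−1 + 1/i₃))`
as `q → 0⁺`. -/
theorem three_dim_monomial_scaling_strict_max (i₁ i₂ i₃ : ℕ)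
    (h1 : 1 ≤ i₁) (h2 : i₁ ≤ i₂) (h3 : i₂ < i₃) :
    IsThetaAtZero
      (fun q : ℝ => ∫ x₁ in (0:ℝ)..1, ∫ x₂ in (0:ℝ)..1, ∫ x₃ in (0:ℝ)..1,
        1 / (x₁ ^ i₁ * x₂ ^ i₂ * x₃ ^ i₃ + q))
      (fun q : ℝ => q ^ (-1 + 1/(i₃:ℝ))) := by
  classical
  have hn2 : 2 ≤ i₃ := by omega
  have hi₃R : (0:ℝ) < i₃ := by positivity
  set e₁ : ℝ := -(i₁:ℝ)/(i₃:ℝ) with he₁def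
  set e₂ : ℝ := -(i₂:ℝ)/(i₃:ℝ) with he₂def
  have hi₁lt : (i₁:ℝ) < (i₃:ℝ) := by exact_mod_cast (by omega : i₁ < i₃)
  have hi₂lt : (i₂:ℝ) < (i₃:ℝ) := by exact_mod_cast h3
  have he₁ : -1 < e₁ := by
    rw [he₁def, neg_div, neg_lt_neg_iff, div_lt_one hi₃R]
    exact hi₁lt
  have he₂ : -1 < e₂ := by
    rw [he₂def, neg_div, neg_lt_neg_iff, div_lt_one hi₃R]
    exact hi₂lt
  have he₁nonpos : e₁ ≤ 0 := by
    rw [he₁def, neg_div]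
    simp [div_nonneg (by positivity : (0:ℝ) ≤ (i₁:ℝ)) hi₃R.le]
  have he₂nonpos : e₂ ≤ 0 := by
    rw [he₂def, neg_div]
    simp [div_nonneg (by positivity : (0:ℝ) ≤ (i₂:ℝ)) hi₃R.le]
  have he₁1 : 0 < e₁ + 1 := by linarith
  have he₂1 : 0 < e₂ + 1 := by linarith
  have hA : ∀ e : ℝ, -1 < e → (∫ x in (0:ℝ)..1, x ^ e) = (e+1)⁻¹ := by
    intro e he
    rw [integral_rpow (Or.inl he), Real.one_rpow,
      Real.zero_rpow (ne_of_gt (by linarith : (0:ℝ) < e + 1))]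
    rw [sub_zero, one_div]
  refine ⟨1/2, 2*(e₂+1)⁻¹*(e₁+1)⁻¹ + 1/2, 1, by norm_num, ?_, one_pos, ?_⟩
  · nlinarith [inv_pos.2 he₁1, inv_pos.2 he₂1, mul_pos (inv_pos.2 he₂1) (inv_pos.2 he₁1)]
  intro q hq hq1
  beta_reduce
  set r : ℝ := -1 + 1/(i₃:ℝ) with hrdef
  have hqr : 0 < q ^ r := Real.rpow_pos_of_pos hq _
  -- notation
  set inn : ℝ → ℝ → ℝ := fun x₁ x₂ =>
    ∫ x₃ in (0:ℝ)..1, 1 / (x₁ ^ i₁ * x₂ ^ i₂ * x₃ ^ i₃ + q) with hinn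
  set mid : ℝ → ℝ := fun x₁ => ∫ x₂ in (0:ℝ)..1, inn x₁ x₂ with hmid
  -- uniform bound on inn
  have inn_bound : ∀ x₁ x₂ : ℝ, 0 ≤ x₁ → 0 ≤ x₂ → ‖inn x₁ x₂‖ ≤ 1/q := by
    intro x₁ x₂ hx₁ hx₂
    have := intervalIntegral.norm_integral_le_of_norm_le_const (C := 1/q)
      (f := fun x₃ : ℝ => 1 / (x₁ ^ i₁ * x₂ ^ i₂ * x₃ ^ i₃ + q)) (a := 0) (b := 1) ?_
    · have h10 : (1/q) * |(1:ℝ) - 0| = 1/q := by norm_num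
      rw [h10] at this
      exact this
    · intro x₃ hx₃
      rw [Set.uIoc_of_le zero_le_one] at hx₃
      have hx₃0 : 0 ≤ x₃ := hx₃.1.le
      have hp : 0 ≤ x₁ ^ i₁ * x₂ ^ i₂ * x₃ ^ i₃ := by positivity
      have hd : 0 < x₁ ^ i₁ * x₂ ^ i₂ * x₃ ^ i₃ + q := by linarith
      rw [Real.norm_eq_abs, abs_of_nonneg (by positivity)]
      apply one_div_le_one_div_of_le hq
      linarith
  -- interval integrability of inn x₁ in x₂
  have int_inn : ∀ x₁ : ℝ, 0 ≤ x₁ → IntervalIntegrable (inn x₁) volume 0 1 := by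
    intro x₁ hx₁
    rw [intervalIntegrable_iff_integrableOn_Ioc_of_le zero_le_one]
    have hconst : IntegrableOn (fun _ : ℝ => 1/q) (Set.Ioc (0:ℝ) 1) volume := by
      exact integrableOn_const (by simp [Real.volume_Ioc]) (by simp)
    apply hconst.mono' ?_ ?_
    · have hm : StronglyMeasurable (inn x₁) := by
        have : inn x₁ = fun x₂ => (fun p : ℝ × ℝ =>
            ∫ x₃ in (0:ℝ)..1, 1 / (p.1 ^ i₁ * p.2 ^ i₂ * x₃ ^ i₃ + q)) (x₁, x₂) := rfl
        rw [this]
        exact (meas_inner i₁ i₂ i₃ q).comp_measurable measurable_prodMk_left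
      exact hm.aestronglyMeasurable
    · filter_upwards [MeasureTheory.ae_restrict_mem measurableSet_Ioc] with x₂ hx₂
      exact inn_bound x₁ x₂ hx₁ hx₂.1.le
  -- interval integrability of mid
  have int_mid : IntervalIntegrable mid volume 0 1 := by
    rw [intervalIntegrable_iff_integrableOn_Ioc_of_le zero_le_one]
    have hconst : IntegrableOn (fun _ : ℝ => 1/q) (Set.Ioc (0:ℝ) 1) volume := by
      exact integrableOn_const (by simp [Real.volume_Ioc]) (by simp)
    apply hconst.mono' ((meas_mid i₁ i₂ i₃ q).aestronglyMeasurable)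
    filter_upwards [MeasureTheory.ae_restrict_mem measurableSet_Ioc] with x₁ hx₁
    have := intervalIntegral.norm_integral_le_of_norm_le_const (C := 1/q)
      (f := inn x₁) (a := 0) (b := 1) ?_
    · have h10 : (1/q) * |(1:ℝ) - 0| = 1/q := by norm_num
      rw [h10] at this
      exact this
    · intro x₂ hx₂
      rw [Set.uIoc_of_le zero_le_one] at hx₂
      exact inn_bound x₁ x₂ hx₁.1.le hx₂.1.le
  constructor
  · -- lower bound
    have hL := low1d i₃ (by omega) q hq hq1.le
    set L : ℝ := ∫ x₃ in (0:ℝ)..1, 1 / (x₃ ^ i₃ + q) with hLdef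
    have hbig_int : IntervalIntegrable (fun x₃ : ℝ => 1 / (x₃ ^ i₃ + q)) volume 0 1 := by
      have := int01 1 q zero_le_one hq i₃
      simpa using this
    have hinn_low : ∀ x₁ ∈ Set.Icc (0:ℝ) 1, ∀ x₂ ∈ Set.Icc (0:ℝ) 1, L ≤ inn x₁ x₂ := by
      intro x₁ hx₁ x₂ hx₂
      apply intervalIntegral.integral_mono_on zero_le_one hbig_int
        (int01 (x₁ ^ i₁ * x₂ ^ i₂) q (mul_nonneg (pow_nonneg hx₁.1 _) (pow_nonneg hx₂.1 _)) hq i₃)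
      intro x₃ hx₃
      have hc1 : x₁ ^ i₁ * x₂ ^ i₂ ≤ 1 :=
        mul_le_one₀ (pow_le_one₀ hx₁.1 hx₁.2) (pow_nonneg hx₂.1 _) (pow_le_one₀ hx₂.1 hx₂.2)
      have hc0 : 0 ≤ x₁ ^ i₁ * x₂ ^ i₂ := mul_nonneg (pow_nonneg hx₁.1 _) (pow_nonneg hx₂.1 _)
      have hx₃n : 0 ≤ x₃ ^ i₃ := pow_nonneg hx₃.1 i₃
      have hmle : x₁ ^ i₁ * x₂ ^ i₂ * x₃ ^ i₃ ≤ x₃ ^ i₃ := by nlinarith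
      have hd : 0 < x₁ ^ i₁ * x₂ ^ i₂ * x₃ ^ i₃ + q := by nlinarith
      apply one_div_le_one_div_of_le hd
      linarith
    have hmid_low : ∀ x₁ ∈ Set.Icc (0:ℝ) 1, L ≤ mid x₁ := by
      intro x₁ hx₁
      have := intervalIntegral.integral_mono_on zero_le_one
        (_root_.intervalIntegrable_const (c := L)) (int_inn x₁ hx₁.1)
        (fun x₂ hx₂ => hinn_low x₁ hx₁ x₂ hx₂)
      have hc : (∫ _ in (0:ℝ)..1, L) = L := by
        rw [intervalIntegral.integral_const, smul_eq_mul]; ring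
      rw [hc] at this
      exact this
    have hI_low : L ≤ ∫ x₁ in (0:ℝ)..1, mid x₁ := by
      have := intervalIntegral.integral_mono_on zero_le_one
        (_root_.intervalIntegrable_const (c := L)) int_mid hmid_low
      have hc : (∫ _ in (0:ℝ)..1, L) = L := by
        rw [intervalIntegral.integral_const, smul_eq_mul]; ring
      rw [hc] at this
      exact this
    calc (1/2) * q ^ r ≤ L := hL
      _ ≤ ∫ x₁ in (0:ℝ)..1, mid x₁ := hI_low
  · -- upper bound
    have hres : volume.restrict (Set.Icc (0:ℝ) 1) = volume.restrict (Set.Ioc (0:ℝ) 1) :=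
      (MeasureTheory.Measure.restrict_congr_set MeasureTheory.Ioc_ae_eq_Icc).symm
    have hinn_up : ∀ x₁ ∈ Set.Ioc (0:ℝ) 1, ∀ x₂ ∈ Set.Ioc (0:ℝ) 1,
        inn x₁ x₂ ≤ 2 * q ^ r * x₁ ^ e₁ * x₂ ^ e₂ := by
      intro x₁ hx₁ x₂ hx₂
      have hb : 0 < x₁ ^ i₁ * x₂ ^ i₂ := mul_pos (pow_pos hx₁.1 _) (pow_pos hx₂.1 _)
      have := up1d i₃ hn2 (x₁ ^ i₁ * x₂ ^ i₂) q hb hq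
      have hsplitpow : (x₁ ^ i₁ * x₂ ^ i₂) ^ (-(1/(i₃:ℝ))) = x₁ ^ e₁ * x₂ ^ e₂ := by
        rw [Real.mul_rpow (pow_nonneg hx₁.1.le _) (pow_nonneg hx₂.1.le _),
          ← Real.rpow_natCast x₁ i₁, ← Real.rpow_natCast x₂ i₂,
          ← Real.rpow_mul hx₁.1.le, ← Real.rpow_mul hx₂.1.le]
        congr 2
        · rw [he₁def]; ring
        · rw [he₂def]; ring
      rw [hsplitpow] at this
      calc inn x₁ x₂ ≤ 2 * q ^ r * (x₁ ^ e₁ * x₂ ^ e₂) := this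
        _ = 2 * q ^ r * x₁ ^ e₁ * x₂ ^ e₂ := by ring
    have hmid_up : ∀ x₁ ∈ Set.Ioc (0:ℝ) 1,
        mid x₁ ≤ 2 * q ^ r * x₁ ^ e₁ * (e₂+1)⁻¹ := by
      intro x₁ hx₁
      have hIb : IntervalIntegrable (fun x₂ : ℝ => 2 * q ^ r * x₁ ^ e₁ * x₂ ^ e₂)
          volume 0 1 := (intervalIntegrable_rpow' he₂).const_mul _
      have hmono := intervalIntegral.integral_mono_ae_restrict zero_le_one
        (int_inn x₁ hx₁.1.le) hIb ?_
      · have hev : (∫ x₂ in (0:ℝ)..1, 2 * q ^ r * x₁ ^ e₁ * x₂ ^ e₂)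
            = 2 * q ^ r * x₁ ^ e₁ * (e₂+1)⁻¹ := by
          rw [intervalIntegral.integral_const_mul, hA e₂ he₂]
        rw [hev] at hmono
        exact hmono
      · rw [hres]
        filter_upwards [MeasureTheory.ae_restrict_mem measurableSet_Ioc] with x₂ hx₂
        exact hinn_up x₁ hx₁ x₂ hx₂
    have hI_up : (∫ x₁ in (0:ℝ)..1, mid x₁)
        ≤ 2 * q ^ r * (e₂+1)⁻¹ * (e₁+1)⁻¹ := by
      have hIb : IntervalIntegrable (fun x₁ : ℝ => 2 * q ^ r * (e₂+1)⁻¹ * x₁ ^ e₁)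
          volume 0 1 := (intervalIntegrable_rpow' he₁).const_mul _
      have hmono := intervalIntegral.integral_mono_ae_restrict zero_le_one int_mid hIb ?_
      · have hev : (∫ x₁ in (0:ℝ)..1, 2 * q ^ r * (e₂+1)⁻¹ * x₁ ^ e₁)
            = 2 * q ^ r * (e₂+1)⁻¹ * (e₁+1)⁻¹ := by
          rw [intervalIntegral.integral_const_mul, hA e₁ he₁]
        rw [hev] at hmono
        exact hmono
      · rw [hres]
        filter_upwards [MeasureTheory.ae_restrict_mem measurableSet_Ioc] with x₁ hx₁
        calc mid x₁ ≤ 2 * q ^ r * x₁ ^ e₁ * (e₂+1)⁻¹ := hmid_up x₁ hx₁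
          _ = 2 * q ^ r * (e₂+1)⁻¹ * x₁ ^ e₁ := by ring
    calc (∫ x₁ in (0:ℝ)..1, mid x₁) ≤ 2 * q ^ r * (e₂+1)⁻¹ * (e₁+1)⁻¹ := hI_up
      _ ≤ (2*(e₂+1)⁻¹*(e₁+1)⁻¹ + 1/2) * q ^ r := by nlinarith
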